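/- Let g ∈ F_q[X] be monic irreducible with g(0) ≠ 0, and let s be a periodic sequence over F_q with minimal polynomial h (h monic, h(0) ≠ 0). Then the minimal polynomial of the sequence g(L) s equals h/g if g divides h, and equals h if g does not divide h. -/

import Mathlib

open Polynomial

/-- The (left) shift operator `L` on sequences over `F`, as an `F`-linear endomorphism. -/
def shiftL (F : Type*) [CommSemiring F] : Module.End F (ℕ → F) where
  toFun s := fun i => s (i + 1)
  map_add' _ _ := rfl
  map_smul' _ _ := rfl

/-- For a polynomial `f`, the operator `f(L)` on sequences. -/
noncomputable def polyL {F : Type*} [CommSemiring F] (f : Polynomial F) :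
    Module.End F (ℕ → F) :=
  Polynomial.aeval (shiftL F) f

/-- `Ω(f)`: the set of sequences annihilated by `f(L)`. -/
def OmegaSet {F : Type*} [CommSemiring F] (f : Polynomial F) : Set (ℕ → F) :=
  {s | polyL f s = 0}

/-- Two sequences are shift equivalent if one is a shift of the other. -/
def ShiftEquiv {F : Type*} [CommSemiring F] (s s' : ℕ → F) : Prop :=
  ∃ ℓ : ℕ, s' = (shiftL F ^ ℓ) s

/-- The cycle (shift-equivalence class) of a sequence. -/
def seqCycle {F : Type*} [CommSemiring F] (s : ℕ → F) : Set (ℕ → F) :=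
  {s' | ∃ ℓ : ℕ, s' = (shiftL F ^ ℓ) s}

/-- `N` is the least period of the sequence `s`. -/
def IsLeastPeriod {F : Type*} (s : ℕ → F) (N : ℕ) : Prop :=
  0 < N ∧ (∀ i, s (i + N) = s i) ∧ ∀ M : ℕ, 0 < M → (∀ i, s (i + M) = s i) → N ≤ M

/-- `h` is the minimal polynomial of the sequence `s`: it is monic, annihilates `s`,
and divides every polynomial annihilating `s`. -/
def IsMinPolyOfSeq {F : Type*} [CommSemiring F] (s : ℕ → F) (h : Polynomial F) : Prop :=
  h.Monic ∧ polyL h s = 0 ∧ ∀ h' : Polynomial F, polyL h' s = 0 → h ∣ h'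

/-- `e = ord(f)`: the least `N ≥ 1` with `f ∣ X^N - 1`. -/
def IsOrderOf {F : Type*} [CommRing F] (f : Polynomial F) (e : ℕ) : Prop :=
  0 < e ∧ f ∣ X ^ e - 1 ∧ ∀ N : ℕ, 0 < N → f ∣ X ^ N - 1 → e ≤ N

/-- for `s` periodic with minimal polynomial `h` (monic, `h(0) ≠ 0`), the
minimal polynomial of `g(L)s` is `h/g` if `g ∣ h`, and `h` otherwise. -/
theorem stmt8 {F : Type*} [Field F] [Fintype F]
    (g : Polynomial F) (hmonic : g.Monic) (hirr : Irreducible g) (hg0 : g.coeff 0 ≠ 0)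
    (s : ℕ → F) (hper : ∃ N : ℕ, 0 < N ∧ ∀ i, s (i + N) = s i)
    (h : Polynomial F) (hh0 : h.coeff 0 ≠ 0) (hmin : IsMinPolyOfSeq s h) :
    (g ∣ h → IsMinPolyOfSeq (polyL g s) (h / g)) ∧
    (¬ g ∣ h → IsMinPolyOfSeq (polyL g s) h) := by
  have hgL : ∀ (a b : Polynomial F) (t : ℕ → F), polyL a (polyL b t) = polyL (a * b) t := by
    intro a b t
    simp [polyL, map_mul, Module.End.mul_apply]
  obtain ⟨hhm, hhann, hhdvd⟩ := hmin
  have hg_ne : g ≠ 0 := hmonic.ne_zero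
  constructor
  · intro hdvd
    obtain ⟨k, hk⟩ := hdvd
    have hkdef : h / g = k := by
      rw [hk]; exact mul_div_cancel_left₀ k hg_ne
    rw [hkdef]
    refine ⟨?_, ?_, ?_⟩
    · exact hmonic.of_mul_monic_left (hk ▸ hhm)
    · rw [hgL, mul_comm, ← hk, hhann]
    · intro h' hy
      rw [hgL] at hy
      have hdv : h ∣ h' * g := hhdvd _ hy
      rw [hk, mul_comm h' g] at hdv
      exact (mul_dvd_mul_iff_left hg_ne).mp hdv
  · intro hndvd
    have hcop : IsCoprime g h := (hirr.isCoprime_or_dvd h).resolve_right hndvd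
    refine ⟨hhm, ?_, ?_⟩
    · rw [hgL, mul_comm, ← hgL, hhann, map_zero]
    · intro h' hy
      rw [hgL] at hy
      exact hcop.symm.dvd_of_dvd_mul_right (hhdvd _ hy)
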